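/- arXiv:2009.03395 — 5 statements merged into one kernel-verified Lean document; each statement's English description precedes it below -/
import Mathlib

section
/- For all real numbers r ≥ 0, s ≥ 1, and τ with 0 < τ < 1, we have log(1 + r/s) ≤ ((1+r)^τ / s^τ) · log(1 + r). -/
theorem log_one_add_div_le_of_one_le (r s τ : ℝ) (hr : 0 ≤ r) (hs : 1 ≤ s)
    (hτ0 : 0 < τ) (hτ1 : τ < 1) :
    Real.log (1 + r / s) ≤ ((1 + r) ^ τ / s ^ τ) * Real.log (1 + r) := by
  have h1r : (0:ℝ) < 1 + r := by linarith
  have hs0 : (0:ℝ) < s := by linarith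
  have hlog : 0 ≤ Real.log (1 + r) := Real.log_nonneg (by linarith)
  rw [← Real.div_rpow (le_of_lt h1r) hs0.le]
  rcases le_or_gt s (1 + r) with h | h
  · have ha : 1 ≤ (1 + r) / s := (one_le_div hs0).2 h
    have h2 : Real.log (1 + r / s) ≤ Real.log (1 + r) := by
      apply Real.log_le_log (by positivity)
      have : r / s ≤ r := div_le_self hr hs
      linarith
    have h3 : (1:ℝ) ≤ ((1 + r) / s) ^ τ := Real.one_le_rpow ha hτ0.le
    nlinarith
  · have ha0 : 0 < (1 + r) / s := by positivity
    have ha1 : (1 + r) / s ≤ 1 := by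
      rw [div_le_one hs0]; linarith
    have h3 : (1 + r) / s ≤ ((1 + r) / s) ^ τ := by
      calc (1 + r) / s = ((1+r)/s) ^ (1:ℝ) := (Real.rpow_one _).symm
        _ ≤ ((1+r)/s) ^ τ := Real.rpow_le_rpow_of_exponent_ge ha0 ha1 hτ1.le
    have h4 : Real.log (1 + r / s) ≤ r / s := by
      have := Real.log_le_sub_one_of_pos (x := 1 + r / s) (by positivity)
      linarith
    have h5 : r ≤ (1 + r) * Real.log (1 + r) := by
      have h6 := Real.one_sub_inv_le_log_of_pos h1r
      have h7 : (1 + r) * (1 - (1 + r)⁻¹) = r := by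
        field_simp
        ring
      nlinarith
    calc Real.log (1 + r / s) ≤ r / s := h4
      _ ≤ (1 + r) / s * Real.log (1 + r) := by
          rw [div_mul_eq_mul_div]
          gcongr
      _ ≤ ((1 + r) / s) ^ τ * Real.log (1 + r) :=
          mul_le_mul_of_nonneg_right h3 hlog
end

section
/- For all real numbers r > 0, s > 0, and τ with 0 < τ < 1, we have log(1 + r/s) ≤ max(1/s, 1/s^τ) · (1+r)^τ · log(1 + r). -/
theorem log_one_add_div_le_max (r s τ : ℝ) (hr : 0 < r) (hs : 0 < s)
    (hτ0 : 0 < τ) (hτ1 : τ < 1) :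
    Real.log (1 + r / s) ≤ max (1 / s) (1 / s ^ τ) * (1 + r) ^ τ * Real.log (1 + r) := by
  have h1r : (1:ℝ) < 1 + r := by linarith
  have h1r0 : (0:ℝ) < 1 + r := by linarith
  have hL : 0 < Real.log (1 + r) := Real.log_pos h1r
  have hpowpos : 0 < (1 + r) ^ τ := Real.rpow_pos_of_pos h1r0 τ
  have hpow1 : (1:ℝ) ≤ (1 + r) ^ τ := Real.one_le_rpow h1r.le hτ0.le
  have hsτ : (0:ℝ) < s ^ τ := Real.rpow_pos_of_pos hs τ
  rcases le_or_gt s 1 with hs1 | hs1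
  · -- s ≤ 1: use Bernoulli (1+r)^(1/s) ≥ 1 + r/s
    have hinv : (1:ℝ) ≤ 1 / s := one_le_one_div hs hs1
    have hbern : 1 + (1/s) * r ≤ (1 + r) ^ (1/s) :=
      one_add_mul_self_le_rpow_one_add (by linarith) hinv
    have h1 : Real.log (1 + r / s) ≤ (1/s) * Real.log (1 + r) := by
      calc Real.log (1 + r / s) ≤ Real.log ((1 + r) ^ (1/s)) := by
            apply Real.log_le_log (by positivity)
            have e : r / s = 1/s * r := by ring
            rw [e]; exact hbern
        _ = (1/s) * Real.log (1 + r) := Real.log_rpow h1r0 _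
    have hmax : 1 / s ≤ max (1 / s) (1 / s ^ τ) := le_max_left _ _
    calc Real.log (1 + r / s) ≤ (1/s) * Real.log (1 + r) := h1
      _ ≤ max (1 / s) (1 / s ^ τ) * (1 + r) ^ τ * Real.log (1 + r) := by
          apply mul_le_mul_of_nonneg_right _ hL.le
          calc (1:ℝ)/s = (1/s) * 1 := (mul_one _).symm
            _ ≤ max (1 / s) (1 / s ^ τ) * (1 + r) ^ τ :=
              mul_le_mul hmax hpow1 zero_le_one (le_trans (by positivity) hmax)
  · -- s > 1
    have hmax : 1 / s ^ τ ≤ max (1 / s) (1 / s ^ τ) := le_max_right _ _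
    have hkey : ((1 + r) / s) ^ τ * Real.log (1 + r) ≤
        max (1 / s) (1 / s ^ τ) * (1 + r) ^ τ * Real.log (1 + r) := by
      apply mul_le_mul_of_nonneg_right _ hL.le
      rw [Real.div_rpow h1r0.le hs.le]
      calc (1 + r) ^ τ / s ^ τ = 1 / s ^ τ * (1 + r) ^ τ := by ring
        _ ≤ max (1 / s) (1 / s ^ τ) * (1 + r) ^ τ :=
          mul_le_mul_of_nonneg_right hmax hpowpos.le
    refine le_trans ?_ hkey
    rcases le_or_gt s (1 + r) with hs2 | hs2
    · -- 1 < s ≤ 1+r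
      have hb : (1:ℝ) ≤ (1 + r) / s := (one_le_div hs).mpr hs2
      have h1 : Real.log (1 + r / s) ≤ Real.log (1 + r) := by
        apply Real.log_le_log (by positivity)
        have : r / s ≤ r := by
          rw [div_le_iff₀ hs]; nlinarith
        linarith
      calc Real.log (1 + r / s) ≤ Real.log (1 + r) := h1
        _ = 1 * Real.log (1 + r) := (one_mul _).symm
        _ ≤ ((1 + r) / s) ^ τ * Real.log (1 + r) :=
          mul_le_mul_of_nonneg_right (Real.one_le_rpow hb hτ0.le) hL.le
    · -- s > 1+r
      have hx0 : (0:ℝ) < (1 + r) / s := by positivity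
      have hx1 : (1 + r) / s ≤ 1 := (div_le_one hs).mpr hs2.le
      have h1 : Real.log (1 + r / s) ≤ r / s := by
        have := Real.log_le_sub_one_of_pos (x := 1 + r / s) (by positivity)
        linarith
      have h2 : r / (1 + r) ≤ Real.log (1 + r) := by
        have := Real.log_le_sub_one_of_pos (x := (1 + r)⁻¹) (by positivity)
        rw [Real.log_inv] at this
        have hinv : (1 + r)⁻¹ = 1 - r / (1 + r) := by
          field_simp; ring
        rw [hinv] at this
        linarith
      have h3 : (1 + r) / s ≤ ((1 + r) / s) ^ τ := by
        calc (1 + r) / s = ((1 + r) / s) ^ (1:ℝ) := (Real.rpow_one _).symm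
          _ ≤ ((1 + r) / s) ^ τ := Real.rpow_le_rpow_of_exponent_ge hx0 hx1 hτ1.le
      calc Real.log (1 + r / s) ≤ r / s := h1
        _ = (1 + r) / s * (r / (1 + r)) := by field_simp
        _ ≤ ((1 + r) / s) ^ τ * Real.log (1 + r) :=
          mul_le_mul h3 h2 (by positivity) (by positivity)
end

section
/- Let ν ≥ √3 − 2 be real. Define f : ℝ → ℝ by f(t) = t − t²/(2(ν+2)) + t³/(6(ν+2)(ν+3)). Then f is monotone nondecreasing on ℝ, and for all t ≤ 2(ν+2), f(t) ≤ 4(ν+2)²/(3(ν+3)). -/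
theorem monotone_and_bound_cubic (ν : ℝ) (hν : Real.sqrt 3 - 2 ≤ ν) :
    Monotone (fun t : ℝ => t - t ^ 2 / (2 * (ν + 2)) + t ^ 3 / (6 * (ν + 2) * (ν + 3))) ∧
      ∀ t : ℝ, t ≤ 2 * (ν + 2) →
        t - t ^ 2 / (2 * (ν + 2)) + t ^ 3 / (6 * (ν + 2) * (ν + 3)) ≤
          4 * (ν + 2) ^ 2 / (3 * (ν + 3)) := by
  have h3 : (1:ℝ) < Real.sqrt 3 := by
    nlinarith [Real.sq_sqrt (show (0:ℝ) ≤ 3 by norm_num), Real.sqrt_nonneg 3]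
  have ha : (1:ℝ) < ν + 2 := by linarith
  have ha0 : (0:ℝ) < ν + 2 := by linarith
  have hb : (0:ℝ) < ν + 3 := by linarith
  have hmono : Monotone (fun t : ℝ => t - t ^ 2 / (2 * (ν + 2)) + t ^ 3 / (6 * (ν + 2) * (ν + 3))) := by
    intro x y hxy
    simp only
    have key : 0 ≤ (y - x) * ((x^2 + x*y + y^2) - 3*(ν+3)*(x+y) + 6*(ν+2)*(ν+3)) := by
      apply mul_nonneg (by linarith)
      nlinarith [sq_nonneg (x + y - 2*(ν+3)), sq_nonneg (x - y)]
    have eq : (y - y ^ 2 / (2 * (ν + 2)) + y ^ 3 / (6 * (ν + 2) * (ν + 3))) -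
        (x - x ^ 2 / (2 * (ν + 2)) + x ^ 3 / (6 * (ν + 2) * (ν + 3))) =
        ((y - x) * ((x^2 + x*y + y^2) - 3*(ν+3)*(x+y) + 6*(ν+2)*(ν+3))) / (6*(ν+2)*(ν+3)) := by
      field_simp
      ring
    have hd : 0 ≤ ((y - x) * ((x^2 + x*y + y^2) - 3*(ν+3)*(x+y) + 6*(ν+2)*(ν+3))) / (6*(ν+2)*(ν+3)) :=
      div_nonneg key (by positivity)
    linarith [eq ▸ hd]
  refine ⟨hmono, fun t ht => ?_⟩
  have := hmono ht
  simp only at this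
  have eq2 : 2*(ν+2) - (2*(ν+2)) ^ 2 / (2 * (ν + 2)) + (2*(ν+2)) ^ 3 / (6 * (ν + 2) * (ν + 3)) =
      4 * (ν + 2) ^ 2 / (3 * (ν + 3)) := by
    field_simp
    ring
  linarith [eq2 ▸ this]
end

section
/- Let ν ≥ √3 − 2 and 0 ≤ x ≤ 2√(2(ν+2)). Then the Bessel function of the first kind satisfies |J_ν(x)| ≤ x^ν / (2^ν Γ(ν+1)). -/
noncomputable def besselJ (ν x : ℝ) : ℝ :=
  (x / 2) ^ ν *
    ∑' m : ℕ, (-1 : ℝ) ^ m / (m.factorial * Real.Gamma (m + ν + 1)) * (x / 2) ^ (2 * m)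

lemma gamma_lb (a : ℝ) (ha : 0 < a) (m : ℕ) :
    a ^ m * Real.Gamma a ≤ Real.Gamma (a + m) := by
  induction m with
  | zero => simp
  | succ n ih =>
    have h1 : (0:ℝ) < a + n := by positivity
    have h2 : Real.Gamma (a + (n + 1 : ℕ)) = (a + n) * Real.Gamma (a + n) := by
      push_cast
      rw [show a + ((n:ℝ) + 1) = (a + n) + 1 by ring, Real.Gamma_add_one h1.ne']
    rw [h2]
    have hg : 0 < Real.Gamma a := Real.Gamma_pos_of_pos ha
    calc a ^ (n+1) * Real.Gamma a = a * (a ^ n * Real.Gamma a) := by ring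
    _ ≤ (a + n) * (a ^ n * Real.Gamma a) := by
        apply mul_le_mul_of_nonneg_right (by linarith [Nat.cast_nonneg (α := ℝ) n]) (by positivity)
    _ ≤ (a + n) * Real.Gamma (a + n) := by
        apply mul_le_mul_of_nonneg_left ih h1.le

lemma summable_t (a u : ℝ) (ha : 0 < a) (hu : 0 ≤ u) :
    Summable (fun m : ℕ => u ^ m / (m.factorial * Real.Gamma (a + m))) := by
  have hg : 0 < Real.Gamma a := Real.Gamma_pos_of_pos ha
  refine Summable.of_nonneg_of_le ?_ ?_ ((Real.summable_pow_div_factorial (u / a)).mul_left (1 / Real.Gamma a))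
  · intro m
    have : 0 < Real.Gamma (a + m) := Real.Gamma_pos_of_pos (by positivity)
    positivity
  · intro m
    have hgm : 0 < Real.Gamma (a + m) := Real.Gamma_pos_of_pos (by positivity)
    have hlb := gamma_lb a ha m
    rw [div_le_iff₀ (by positivity)]
    have : (1 / Real.Gamma a) * ((u / a) ^ m / m.factorial) * (m.factorial * (a ^ m * Real.Gamma a))
        = u ^ m := by
      field_simp
      rw [← mul_pow, div_mul_cancel₀ u ha.ne']
    calc u ^ m = (1 / Real.Gamma a) * ((u / a) ^ m / m.factorial) * (m.factorial * (a ^ m * Real.Gamma a)) := this.symm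
    _ ≤ (1 / Real.Gamma a) * ((u / a) ^ m / m.factorial) * (m.factorial * Real.Gamma (a + m)) := by
        apply mul_le_mul_of_nonneg_left _ (by positivity)
        exact mul_le_mul_of_nonneg_left hlb (by positivity)

lemma cubic_key (a u : ℝ) (ha : 0 < a) (hA : 2 ≤ a ^ 2 + 2 * a)
    (hu : 0 ≤ u) (huu : u ≤ 2 * (a + 1)) :
    0 ≤ 12*a*(a+1)*(a+2) - 6*(a+1)*(a+2)*u + 3*(a+2)*u^2 - u^3 := by
  nlinarith [mul_nonneg (by linarith : (0:ℝ) ≤ 2*(a+1) - u)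
      (by nlinarith [sq_nonneg (2*u - a - 4)] : (0:ℝ) ≤ (2*u - a - 4)^2 + 3*a*(5*a+8)),
    mul_nonneg (by linarith : (0:ℝ) ≤ a + 1) (by nlinarith : (0:ℝ) ≤ a^2 + 2*a - 2)]

theorem besselJ_bound (ν x : ℝ) (hν : Real.sqrt 3 - 2 ≤ ν)
    (hx0 : 0 ≤ x) (hx : x ≤ 2 * Real.sqrt (2 * (ν + 2))) :
    |besselJ ν x| ≤ x ^ ν / (2 ^ ν * Real.Gamma (ν + 1)) := by
  set a : ℝ := ν + 1 with ha_def
  have sqrt3_gt : (1:ℝ) < Real.sqrt 3 := by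
    rw [show (1:ℝ) = Real.sqrt 1 by simp]
    exact Real.sqrt_lt_sqrt (by norm_num) (by norm_num)
  have ha : 0 < a := by simp only [ha_def]; linarith
  have hA : 2 ≤ a ^ 2 + 2 * a := by
    have h1 : Real.sqrt 3 ≤ a + 1 := by simp only [ha_def]; linarith
    have h2 : (Real.sqrt 3) ^ 2 ≤ (a + 1) ^ 2 := by
      apply pow_le_pow_left₀ (Real.sqrt_nonneg 3) h1
    rw [Real.sq_sqrt (by norm_num)] at h2
    nlinarith
  set u : ℝ := (x / 2) ^ 2 with hu_def
  have hu : 0 ≤ u := sq_nonneg _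
  have huu : u ≤ 2 * (a + 1) := by
    have hs : 0 ≤ 2 * (ν + 2) := by simp only [ha_def] at ha ⊢; linarith
    have h1 : x / 2 ≤ Real.sqrt (2 * (ν + 2)) := by linarith
    have h2 : (x/2) ^ 2 ≤ (Real.sqrt (2 * (ν + 2))) ^ 2 :=
      pow_le_pow_left₀ (by linarith) h1 2
    rw [Real.sq_sqrt hs] at h2
    simp only [hu_def, ha_def]
    linarith
  have hg : 0 < Real.Gamma a := Real.Gamma_pos_of_pos ha
  set t : ℕ → ℝ := fun m => u ^ m / (m.factorial * Real.Gamma (a + m)) with ht_def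
  have ht_nonneg : ∀ m, 0 ≤ t m := by
    intro m
    have hgm : 0 < Real.Gamma (a + m) := Real.Gamma_pos_of_pos (by positivity)
    simp only [ht_def]
    positivity
  have step : ∀ m : ℕ, 1 ≤ m → t (m + 1) ≤ t m := by
    intro m hm
    have hm1 : (1:ℝ) ≤ m := by exact_mod_cast hm
    have hgm : 0 < Real.Gamma (a + m) := Real.Gamma_pos_of_pos (by positivity)
    have e1 : (((m+1).factorial : ℕ) : ℝ) = ((m:ℝ)+1) * m.factorial := by
      push_cast [Nat.factorial_succ]; ring
    have e2 : Real.Gamma (a + ((m:ℕ)+1)) = (a + m) * Real.Gamma (a + m) := by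
      push_cast
      rw [show a + ((m:ℝ) + 1) = (a + m) + 1 by ring,
        Real.Gamma_add_one (by positivity : (a + (m:ℝ)) ≠ 0)]
    have hcoef : 0 < ((m:ℝ)+1) * (a + m) := by positivity
    have heq : t (m+1) = (u / (((m:ℝ)+1) * (a + m))) * t m := by
      simp only [ht_def]
      rw [e1]
      push_cast
      rw [e2, pow_succ]
      field_simp
    rw [heq]
    have hle1 : u / (((m:ℝ)+1) * (a + m)) ≤ 1 := by
      rw [div_le_one hcoef]
      nlinarith
    nlinarith [ht_nonneg m, mul_le_mul_of_nonneg_right hle1 (ht_nonneg m)]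
  have hsum_t : Summable t := summable_t a u ha hu
  have habs : (fun m : ℕ => |(-1:ℝ)^m * t m|) = t := by
    funext m
    rw [abs_mul, abs_pow, abs_neg, abs_one, one_pow, one_mul, abs_of_nonneg (ht_nonneg m)]
  have hsum_s : Summable (fun m : ℕ => (-1:ℝ)^m * t m) := by
    exact Summable.of_abs (by rw [habs]; exact hsum_t)
  set S : ℝ := ∑' m : ℕ, (-1:ℝ)^m * t m with hS_def
  -- subsequence summability
  have hsub : ∀ (d : ℕ), Summable (fun k : ℕ => t (2 * k + d)) := by
    intro d
    exact hsum_t.comp_injective (fun x y h => by omega)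
  have pair : ∀ d : ℕ, 1 ≤ d → ∑' k : ℕ, t (2*k+d+1) ≤ ∑' k : ℕ, t (2*k+d) :=
    fun d hd => (hsub (d+1)).tsum_le_tsum (fun k => step (2*k+d) (by omega)) (hsub d)
  -- upper bound: S ≤ t 0
  have hT1 : ∑' n : ℕ, (-1:ℝ)^(n+1) * t (n+1) ≤ 0 := by
    have e_ev : (fun k : ℕ => (-1:ℝ)^(2*k+1) * t (2*k+1)) = (fun k : ℕ => -t (2*k+1)) := by
      funext k
      have h : (-1:ℝ)^(2*k+1) = -1 := by simp [pow_succ, pow_mul]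
      rw [h]; ring
    have e_od : (fun k : ℕ => (-1:ℝ)^(2*k+1+1) * t (2*k+1+1)) = (fun k : ℕ => t (2*k+1+1)) := by
      funext k
      have h : (-1:ℝ)^(2*k+1+1) = 1 := by
        rw [show 2*k+1+1 = 2*(k+1) by omega]
        simp [pow_mul]
      rw [h]; ring
    have hev : Summable (fun k : ℕ => (-1:ℝ)^(2*k+1) * t (2*k+1)) := by
      rw [e_ev]; exact (hsub 1).neg
    have hod : Summable (fun k : ℕ => (-1:ℝ)^(2*k+1+1) * t (2*k+1+1)) := by
      rw [e_od]; exact hsub 2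
    have hsplit := tsum_even_add_odd (f := fun n => (-1:ℝ)^(n+1) * t (n+1)) hev hod
    rw [← hsplit, e_ev, e_od, tsum_neg]
    have := pair 1 le_rfl
    linarith
  have hS_upper : S ≤ t 0 := by
    have hdec := Summable.sum_add_tsum_nat_add (f := fun m => (-1:ℝ)^m * t m) 1 hsum_s
    simp only [Finset.sum_range_one, pow_zero, one_mul] at hdec
    rw [hS_def, ← hdec]
    linarith
  -- lower bound
  have hT4 : 0 ≤ ∑' n : ℕ, (-1:ℝ)^(n+4) * t (n+4) := by
    have e_ev : (fun k : ℕ => (-1:ℝ)^(2*k+4) * t (2*k+4)) = (fun k : ℕ => t (2*k+4)) := by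
      funext k
      have h : (-1:ℝ)^(2*k+4) = 1 := by
        rw [show 2*k+4 = 2*(k+2) by omega]
        simp [pow_mul]
      rw [h]; ring
    have e_od : (fun k : ℕ => (-1:ℝ)^(2*k+1+4) * t (2*k+1+4)) = (fun k : ℕ => -t (2*k+4+1)) := by
      funext k
      have h : (-1:ℝ)^(2*k+1+4) = -1 := by
        rw [show 2*k+1+4 = 2*(k+2)+1 by omega]
        simp [pow_succ, pow_mul]
      rw [h, show 2*k+1+4 = 2*k+4+1 by omega]; ring
    have hev : Summable (fun k : ℕ => (-1:ℝ)^(2*k+4) * t (2*k+4)) := by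
      rw [e_ev]; exact hsub 4
    have hod : Summable (fun k : ℕ => (-1:ℝ)^(2*k+1+4) * t (2*k+1+4)) := by
      rw [e_od]; exact (hsub 5).neg
    have hsplit := tsum_even_add_odd (f := fun n => (-1:ℝ)^(n+4) * t (n+4)) hev hod
    rw [← hsplit, e_ev, e_od, tsum_neg]
    have := pair 4 (by omega)
    linarith
  have hG1 : Real.Gamma (a+1) = a * Real.Gamma a := Real.Gamma_add_one ha.ne'
  have hG2 : Real.Gamma (a+2) = (a+1) * (a * Real.Gamma a) := by
    rw [show a+2 = (a+1)+1 by ring, Real.Gamma_add_one (by positivity), hG1]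
  have hG3 : Real.Gamma (a+3) = (a+2) * ((a+1) * (a * Real.Gamma a)) := by
    rw [show a+3 = (a+2)+1 by ring, Real.Gamma_add_one (by positivity), hG2]
  have ht0 : t 0 = 1 / Real.Gamma a := by simp [ht_def]
  have ht1 : t 1 = u / (a * Real.Gamma a) := by
    simp [ht_def, hG1]
  have ht2 : t 2 = u^2 / (2 * ((a+1) * (a * Real.Gamma a))) := by
    have : ((2:ℕ):ℝ) = 2 := by norm_num
    simp [ht_def, this, hG2, Nat.factorial]
  have ht3 : t 3 = u^3 / (6 * ((a+2) * ((a+1) * (a * Real.Gamma a)))) := by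
    have : ((3:ℕ):ℝ) = 3 := by norm_num
    simp [ht_def, this, hG3, Nat.factorial]
  have key : 0 ≤ 12*a*(a+1)*(a+2) - 6*(a+1)*(a+2)*u + 3*(a+2)*u^2 - u^3 :=
    cubic_key a u ha hA hu huu
  have hfour : -(t 0) ≤ t 0 - t 1 + t 2 - t 3 := by
    have e : t 0 - t 1 + t 2 - t 3 + t 0 =
        (12*a*(a+1)*(a+2) - 6*(a+1)*(a+2)*u + 3*(a+2)*u^2 - u^3)
          / (6*a*(a+1)*(a+2)*Real.Gamma a) := by
      rw [ht0, ht1, ht2, ht3]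
      field_simp
      ring
    have hpos : (0:ℝ) < 6*a*(a+1)*(a+2)*Real.Gamma a := by positivity
    have := div_nonneg key hpos.le
    linarith [e ▸ this]
  have hS_lower : -(t 0) ≤ S := by
    have hdec := Summable.sum_add_tsum_nat_add (f := fun m => (-1:ℝ)^m * t m) 4 hsum_s
    have hr : ∑ i ∈ Finset.range 4, (-1:ℝ)^i * t i = t 0 - t 1 + t 2 - t 3 := by
      simp [Finset.sum_range_succ]
      ring
    rw [hr] at hdec
    rw [hS_def, ← hdec]
    linarith
  have habsS : |S| ≤ 1 / Real.Gamma a := by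
    rw [abs_le]
    rw [ht0] at hS_upper hS_lower
    exact ⟨by linarith, hS_upper⟩
  -- assemble
  unfold besselJ
  have hsum_eq : (∑' m : ℕ, (-1:ℝ)^m / (m.factorial * Real.Gamma (m + ν + 1)) * (x/2)^(2*m)) = S := by
    rw [hS_def]
    apply tsum_congr
    intro m
    have h1 : ((m:ℝ) + ν + 1) = a + m := by rw [ha_def]; ring
    rw [h1, pow_mul, ← hu_def]
    simp only [ht_def]
    ring
  rw [hsum_eq, abs_mul, abs_of_nonneg (Real.rpow_nonneg (by linarith : (0:ℝ) ≤ x/2) ν)]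
  have hrw : x ^ ν / (2 ^ ν * Real.Gamma a) = (x/2) ^ ν * (1/Real.Gamma a) := by
    rw [Real.div_rpow hx0 (by norm_num : (0:ℝ) ≤ 2)]
    field_simp
  rw [hrw]
  exact mul_le_mul_of_nonneg_left habsS (Real.rpow_nonneg (by linarith) ν)
end

section
/- Suppose (λ_k) is a sequence of reals and there are constants A > 0, d ≥ 1 such that e^{−dλ} Σ_k (λ − λ_k)₊ → A as λ → ∞. Then e^{−dλ} · #{k : λ_k < λ} → d·A as λ → ∞. -/
open Filter

private lemma exists_bd (lamSeq : ℕ → ℝ) (hlam : Tendsto lamSeq atTop atTop) (l : ℝ) :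
    ∃ n : ℕ, ∀ k, n ≤ k → l ≤ lamSeq k :=
  eventually_atTop.mp (tendsto_atTop.mp hlam l)

private lemma tsum_eq_range (lamSeq : ℕ → ℝ) (l : ℝ) (n : ℕ)
    (hn : ∀ k, n ≤ k → l ≤ lamSeq k) :
    ∑' k, max (l - lamSeq k) 0 = ∑ k ∈ Finset.range n, max (l - lamSeq k) 0 := by
  refine tsum_eq_sum ?_
  intro k hk
  have h1 : l ≤ lamSeq k := hn k (by simpa using hk)
  exact max_eq_right (by linarith)

private lemma card_eq_range (lamSeq : ℕ → ℝ) (l : ℝ) (n : ℕ)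
    (hn : ∀ k, n ≤ k → l ≤ lamSeq k) :
    (Nat.card {k | lamSeq k < l} : ℝ) =
      (((Finset.range n).filter (fun k => lamSeq k < l)).card : ℝ) := by
  congr 1
  have hset : {k | lamSeq k < l} =
      ↑((Finset.range n).filter fun k => lamSeq k < l) := by
    ext k
    simp only [Set.mem_setOf_eq, Finset.coe_filter, Finset.mem_range]
    constructor
    · intro hk
      refine ⟨?_, hk⟩
      by_contra hkn
      exact absurd hk (not_lt.mpr (hn k (le_of_not_gt hkn)))
    · exact fun hh => hh.2
  rw [hset, Nat.card_coe_set_eq, Set.ncard_coe_finset]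

private lemma key_upper (lamSeq : ℕ → ℝ) (hlam : Tendsto lamSeq atTop atTop)
    (l t : ℝ) (ht : 0 < t) :
    t * (Nat.card {k | lamSeq k < l} : ℝ) ≤
      (∑' k, max (l + t - lamSeq k) 0) - ∑' k, max (l - lamSeq k) 0 := by
  obtain ⟨n, hn⟩ := exists_bd lamSeq hlam (l + t)
  have hn' : ∀ k, n ≤ k → l ≤ lamSeq k := fun k hk => by linarith [hn k hk]
  rw [tsum_eq_range lamSeq (l + t) n hn, tsum_eq_range lamSeq l n hn',
      card_eq_range lamSeq l n hn', ← Finset.sum_sub_distrib]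
  have hcard : t * (((Finset.range n).filter (fun k => lamSeq k < l)).card : ℝ)
      = ∑ k ∈ Finset.range n, (if lamSeq k < l then t else 0) := by
    rw [← Finset.sum_filter, Finset.sum_const, nsmul_eq_mul, mul_comm]
  rw [hcard]
  refine Finset.sum_le_sum fun k _ => ?_
  by_cases hk : lamSeq k < l
  · rw [if_pos hk]
    have h1 : max (l + t - lamSeq k) 0 = l + t - lamSeq k := max_eq_left (by linarith)
    have h2 : max (l - lamSeq k) 0 = l - lamSeq k := max_eq_left (by linarith)
    rw [h1, h2]; linarith
  · rw [if_neg hk]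
    push_neg at hk
    have h2 : max (l - lamSeq k) 0 = 0 := max_eq_right (by linarith)
    have h3 := le_max_right (l + t - lamSeq k) 0
    rw [h2]; linarith

private lemma key_lower (lamSeq : ℕ → ℝ) (hlam : Tendsto lamSeq atTop atTop)
    (l t : ℝ) (ht : 0 < t) :
    (∑' k, max (l - lamSeq k) 0) - (∑' k, max (l - t - lamSeq k) 0) ≤
      t * (Nat.card {k | lamSeq k < l} : ℝ) := by
  obtain ⟨n, hn⟩ := exists_bd lamSeq hlam l
  have hn' : ∀ k, n ≤ k → l - t ≤ lamSeq k := fun k hk => by linarith [hn k hk]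
  rw [tsum_eq_range lamSeq l n hn, tsum_eq_range lamSeq (l - t) n hn',
      card_eq_range lamSeq l n hn, ← Finset.sum_sub_distrib]
  have hcard : t * (((Finset.range n).filter (fun k => lamSeq k < l)).card : ℝ)
      = ∑ k ∈ Finset.range n, (if lamSeq k < l then t else 0) := by
    rw [← Finset.sum_filter, Finset.sum_const, nsmul_eq_mul, mul_comm]
  rw [hcard]
  refine Finset.sum_le_sum fun k _ => ?_
  by_cases hk : lamSeq k < l
  · rw [if_pos hk]
    have h1 : max (l - lamSeq k) 0 = l - lamSeq k := max_eq_left (by linarith)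
    have h3 := le_max_left (l - t - lamSeq k) 0
    rw [h1]; linarith
  · rw [if_neg hk]
    push_neg at hk
    have h1 : max (l - lamSeq k) 0 = 0 := max_eq_right (by linarith)
    have h3 := le_max_right (l - t - lamSeq k) 0
    rw [h1]; linarith

private lemma slope_exp_lim (d A : ℝ) :
    Tendsto (fun t : ℝ => A * (Real.exp (d * t) - 1) / t)
      (nhdsWithin 0 (Set.Ioi 0)) (nhds (A * d)) := by
  have hd1 : HasDerivAt (fun t : ℝ => d * t) d 0 := by
    simpa using (hasDerivAt_id (0 : ℝ)).const_mul d
  have hd2 := (Real.hasDerivAt_exp (d * 0)).comp 0 hd1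
  have hd3 : HasDerivAt (fun t : ℝ => A * Real.exp (d * t)) (A * d) 0 := by
    have := hd2.const_mul A
    simpa [mul_comm] using this
  have hslope := hasDerivAt_iff_tendsto_slope.mp hd3
  have hsub : Set.Ioi (0 : ℝ) ⊆ {(0 : ℝ)}ᶜ := fun x hx => by
    simp only [Set.mem_compl_iff, Set.mem_singleton_iff]
    exact ne_of_gt hx
  have h3 := hslope.mono_left (nhdsWithin_mono 0 hsub)
  refine h3.congr fun t => ?_
  rw [slope_fun_def]
  simp only [vsub_eq_sub, smul_eq_mul, sub_zero, mul_zero, Real.exp_zero]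
  rw [div_eq_mul_inv]
  ring

theorem counting_asymptotics_of_riesz (lamSeq : ℕ → ℝ)
    (hlam : Tendsto lamSeq atTop atTop) (d A : ℝ) (hd : 1 ≤ d) (hA : 0 < A)
    (h : Tendsto (fun l : ℝ => Real.exp (-d * l) * ∑' k, max (l - lamSeq k) 0)
      atTop (nhds A)) :
    Tendsto (fun l : ℝ => Real.exp (-d * l) * (Nat.card {k | lamSeq k < l} : ℝ))
      atTop (nhds (d * A)) := by
  set S : ℝ → ℝ := fun l => ∑' k, max (l - lamSeq k) 0 with hSdef
  rw [Metric.tendsto_nhds]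
  intro ε hε
  -- choose step t > 0
  have slope1 := slope_exp_lim d A
  have slope2 : Tendsto (fun t : ℝ => A * (1 - Real.exp (-d * t)) / t)
      (nhdsWithin 0 (Set.Ioi 0)) (nhds (A * d)) := by
    have := slope_exp_lim (-d) (-A)
    have heq : (-A) * (-d) = A * d := by ring
    rw [heq] at this
    refine this.congr fun t => ?_
    ring_nf
  have hlt1 : A * d < d * A + ε := by rw [mul_comm]; linarith
  have hlt2 : d * A - ε < A * d := by rw [mul_comm]; linarith
  have ev1 := slope1.eventually_lt_const hlt1
  have ev2 := slope2.eventually_const_lt hlt2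
  have ev3 : ∀ᶠ t : ℝ in nhdsWithin 0 (Set.Ioi 0), 0 < t :=
    eventually_mem_nhdsWithin.mono (fun x hx => hx)
  obtain ⟨t, ht1, ht2, ht0⟩ := (ev1.and (ev2.and ev3)).exists
  -- shifted limits
  have limShift : ∀ c : ℝ, Tendsto (fun l => Real.exp (-d * l) * S (l + c))
      atTop (nhds (Real.exp (d * c) * A)) := by
    intro c
    have comp : Tendsto (fun l => Real.exp (-d * (l + c)) * S (l + c)) atTop (nhds A) :=
      h.comp (tendsto_atTop_add_const_right _ c tendsto_id)
    have := comp.const_mul (Real.exp (d * c))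
    refine Tendsto.congr (fun l => ?_) this
    rw [← mul_assoc, ← Real.exp_add]
    congr 2
    ring
  have lim1 : Tendsto (fun l => (Real.exp (-d * l) * S (l + t) - Real.exp (-d * l) * S l) / t)
      atTop (nhds (A * (Real.exp (d * t) - 1) / t)) := by
    have := ((limShift t).sub h).div_const t
    have heq : A * (Real.exp (d * t) - 1) / t = (Real.exp (d * t) * A - A) / t := by ring
    rw [heq]
    exact this
  have lim2 : Tendsto (fun l => (Real.exp (-d * l) * S l - Real.exp (-d * l) * S (l + -t)) / t)
      atTop (nhds (A * (1 - Real.exp (-d * t)) / t)) := by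
    have := (h.sub (limShift (-t))).div_const t
    have heq : A * (1 - Real.exp (-d * t)) / t = (A - Real.exp (d * -t) * A) / t := by
      rw [show d * -t = -d * t by ring]; ring
    rw [heq]
    exact this
  have evA := lim1.eventually_lt_const ht1
  have evB := lim2.eventually_const_lt ht2
  filter_upwards [evA, evB] with l hA1 hB1
  rw [Real.dist_eq, abs_lt]
  have hexp : (0 : ℝ) < Real.exp (-d * l) := Real.exp_pos _
  have hkU := key_upper lamSeq hlam l t ht0
  have hkL := key_lower lamSeq hlam l t ht0
  have e1 : Real.exp (-d * l) * (Nat.card {k | lamSeq k < l} : ℝ) ≤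
      (Real.exp (-d * l) * S (l + t) - Real.exp (-d * l) * S l) / t := by
    rw [le_div_iff₀ ht0]
    calc Real.exp (-d * l) * (Nat.card {k | lamSeq k < l} : ℝ) * t
        = Real.exp (-d * l) * (t * (Nat.card {k | lamSeq k < l} : ℝ)) := by ring
      _ ≤ Real.exp (-d * l) * (S (l + t) - S l) :=
          mul_le_mul_of_nonneg_left hkU hexp.le
      _ = Real.exp (-d * l) * S (l + t) - Real.exp (-d * l) * S l := by ring
  have e2 : (Real.exp (-d * l) * S l - Real.exp (-d * l) * S (l + -t)) / t ≤
      Real.exp (-d * l) * (Nat.card {k | lamSeq k < l} : ℝ) := by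
    rw [div_le_iff₀ ht0]
    have hlt : S l - S (l - t) ≤ t * (Nat.card {k | lamSeq k < l} : ℝ) := hkL
    have hrw : l + -t = l - t := by ring
    rw [hrw]
    calc Real.exp (-d * l) * S l - Real.exp (-d * l) * S (l - t)
        = Real.exp (-d * l) * (S l - S (l - t)) := by ring
      _ ≤ Real.exp (-d * l) * (t * (Nat.card {k | lamSeq k < l} : ℝ)) :=
          mul_le_mul_of_nonneg_left hlt hexp.le
      _ = Real.exp (-d * l) * (Nat.card {k | lamSeq k < l} : ℝ) * t := by ring
  constructor <;> linarith
end
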